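/- Let H be a complex Hilbert space and let T be an invertible effect on H (i.e., T is a positive bounded operator with 0 ≤ T ≤ I and T invertible). Then the map φ(E) = (T²(2I−T²)⁻¹)^{-1/2} ((I − T² + T(I+E)⁻¹T)⁻¹ − I) (T²(2I−T²)⁻¹)^{-1/2} is a well-defined bijection of the set E(H) of effects onto itself which preserves the order in both directions: E ≤ F if and only if φ(E) ≤ φ(F). -/

import Mathlib

set_option synthInstance.maxHeartbeats 1000000
set_option maxHeartbeats 1000000

open scoped InnerProductSpace

/-- An effect on a Hilbert space: a positive operator majorized by the identity. -/
def IsEffect {H : Type} [NormedAddCommGroup H] [InnerProductSpace ℂ H] [CompleteSpace H]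
    (E : H →L[ℂ] H) : Prop := 0 ≤ E ∧ E ≤ 1

/-- The order preserving bijection of `E(H)` built from a fixed invertible effect `T`:
`φ(E) = (T²(2I−T²)⁻¹)^{-1/2} ((I − T² + T(I+E)⁻¹T)⁻¹ − I) (T²(2I−T²)⁻¹)^{-1/2}`. -/
noncomputable def molnarMap {H : Type} [NormedAddCommGroup H] [InnerProductSpace ℂ H]
    [CompleteSpace H] (T : H →L[ℂ] H) (E : H →L[ℂ] H) : H →L[ℂ] H :=
  Ring.inverse (CFC.sqrt (T ^ 2 * Ring.inverse (2 - T ^ 2))) *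
    (Ring.inverse (1 - T ^ 2 + T * Ring.inverse (1 + E) * T) - 1) *
      Ring.inverse (CFC.sqrt (T ^ 2 * Ring.inverse (2 - T ^ 2)))

section Helpers

lemma molnar_ring_inverse {A : Type*} [Ring A] (u : Aˣ) {a : A} (h : (↑u : A) = a) :
    Ring.inverse a = (↑u⁻¹ : A) := by
  subst h; exact Ring.inverse_unit u

lemma molnar_conj_cancel {A : Type*} [Monoid A] (u : Aˣ) (a : A) :
    (↑u⁻¹ : A) * ((↑u : A) * a * ↑u) * ↑u⁻¹ = a := by
  simp [mul_assoc]

lemma molnar_sa_inv {A : Type*} [Ring A] [StarRing A] (u : Aˣ)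
    (hu : IsSelfAdjoint (u : A)) : IsSelfAdjoint ((↑u⁻¹ : A)) := by
  have h1 : star ((↑u⁻¹ : A)) * ↑u = 1 := by
    calc star ((↑u⁻¹ : A)) * (↑u : A) = star ((↑u⁻¹ : A)) * star ((↑u : A)) := by
          rw [hu.star_eq]
      _ = star ((↑u : A) * ↑u⁻¹) := (star_mul _ _).symm
      _ = 1 := by rw [Units.mul_inv, star_one]
  show star ((↑u⁻¹ : A)) = (↑u⁻¹ : A)
  calc star ((↑u⁻¹ : A)) = star ((↑u⁻¹ : A)) * ((↑u : A) * ↑u⁻¹) := by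
        rw [Units.mul_inv, mul_one]
    _ = (star ((↑u⁻¹ : A)) * ↑u) * ↑u⁻¹ := by rw [mul_assoc]
    _ = ↑u⁻¹ := by rw [h1, one_mul]

lemma molnar_conj_le_conj_iff {A : Type*} [Ring A] [StarRing A] [PartialOrder A]
    [StarOrderedRing A] (u : Aˣ) (hu : IsSelfAdjoint (u : A)) (a b : A) :
    (↑u : A) * a * ↑u ≤ (↑u : A) * b * ↑u ↔ a ≤ b := by
  constructor
  · intro h
    have h2 := (molnar_sa_inv u hu).conjugate_le_conjugate h
    rwa [molnar_conj_cancel, molnar_conj_cancel] at h2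
  · intro h; exact hu.conjugate_le_conjugate h

end Helpers

/-- The abstract Molnár map in a unital C⋆-algebra. -/
noncomputable def molnarFun {A : Type*} [CStarAlgebra A] [PartialOrder A]
    [StarOrderedRing A] (T E : A) : A :=
  Ring.inverse (CFC.sqrt (T ^ 2 * Ring.inverse (2 - T ^ 2))) *
    (Ring.inverse (1 - T ^ 2 + T * Ring.inverse (1 + E) * T) - 1) *
      Ring.inverse (CFC.sqrt (T ^ 2 * Ring.inverse (2 - T ^ 2)))

theorem molnar_aux {A : Type*} [CStarAlgebra A] [PartialOrder A] [StarOrderedRing A]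
    (T : A) (hT0 : 0 ≤ T) (hT1 : T ≤ 1) (hTu : IsUnit T) :
    Set.BijOn (molnarFun T) {E : A | 0 ≤ E ∧ E ≤ 1} {E : A | 0 ≤ E ∧ E ≤ 1} ∧
      ∀ E F : A, (0 ≤ E ∧ E ≤ 1) → (0 ≤ F ∧ F ≤ 1) →
        (E ≤ F ↔ molnarFun T E ≤ molnarFun T F) := by
  have hTsa : IsSelfAdjoint T := .of_nonneg hT0
  have honeone : (1 : A) + 1 = 2 := one_add_one_eq_two
  have h12 : (1 : A) ≤ 2 := by
    rw [← honeone]; exact le_add_of_nonneg_right zero_le_one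
  have h02 : (0 : A) ≤ 2 := zero_le_one.trans h12
  have hT2 : (0 : A) ≤ T ^ 2 := by
    have h := star_mul_self_nonneg T
    rwa [hTsa.star_eq, ← pow_two] at h
  have hT2le1 : T ^ 2 ≤ 1 := by
    rw [← CStarAlgebra.norm_le_one_iff_of_nonneg _ hT2]
    have h1 : ‖T‖ ≤ 1 := (CStarAlgebra.norm_le_one_iff_of_nonneg T hT0).mpr hT1
    calc ‖T ^ 2‖ = ‖T * T‖ := by rw [pow_two]
      _ ≤ ‖T‖ * ‖T‖ := norm_mul_le _ _
      _ ≤ 1 := by nlinarith [norm_nonneg T]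
  have h2D : (1 : A) ≤ 2 - T ^ 2 := by
    rw [le_sub_iff_add_le, ← honeone]
    exact add_le_add_right hT2le1 1
  have hD0 : (0 : A) ≤ 2 - T ^ 2 := zero_le_one.trans h2D
  have hDu : IsUnit ((2 : A) - T ^ 2) := CStarAlgebra.isUnit_of_le _ h2D (isUnit_one.isStrictlyPositive zero_le_one)
  have h2u : IsUnit (2 : A) := CStarAlgebra.isUnit_of_le _ h12 (isUnit_one.isStrictlyPositive zero_le_one)
  set uD : Aˣ := hDu.unit with huD_def
  have huD : (↑uD : A) = 2 - T ^ 2 := hDu.unit_spec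
  set u2 : Aˣ := h2u.unit with hu2_def
  have hu2 : (↑u2 : A) = 2 := h2u.unit_spec
  set uT : Aˣ := hTu.unit with huT_def
  have huT : (↑uT : A) = T := hTu.unit_spec
  have hcomm2 : ∀ a : A, Commute a 2 := fun a => by
    have h := (Commute.one_right a).add_right (Commute.one_right a)
    rwa [one_add_one_eq_two] at h
  have hcTD : Commute T ((2 : A) - T ^ 2) :=
    (hcomm2 T).sub_right ((Commute.refl T).pow_right 2)
  have hcTDinv : Commute T ((↑uD⁻¹ : A)) := by
    have h : Commute T ((↑uD : A)) := by rw [huD]; exact hcTD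
    exact h.units_inv_right
  have hcT2Dinv : Commute (T ^ 2) ((↑uD⁻¹ : A)) := hcTDinv.pow_left 2
  have hRD : Ring.inverse ((2 : A) - T ^ 2) = (↑uD⁻¹ : A) := molnar_ring_inverse uD huD
  set S : A := T ^ 2 * Ring.inverse (2 - T ^ 2) with hS_def
  have hS1 : S = T * ↑uD⁻¹ * T :=
    calc S = T ^ 2 * ↑uD⁻¹ := by rw [hS_def, hRD]
      _ = T * (T * ↑uD⁻¹) := by rw [pow_two, mul_assoc]
      _ = T * (↑uD⁻¹ * T) := by rw [hcTDinv.eq]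
      _ = T * ↑uD⁻¹ * T := (mul_assoc _ _ _).symm
  have hDinv0 : (0 : A) ≤ ↑uD⁻¹ := CFC.inv_nonneg_of_nonneg uD (by rw [huD]; exact hD0)
  have hS0 : (0 : A) ≤ S := by rw [hS1]; exact hTsa.conjugate_nonneg hDinv0
  have hSu : IsUnit S := by rw [hS_def, hRD]; exact (hTu.pow 2).mul uD⁻¹.isUnit
  set s : A := CFC.sqrt S with hs_def
  have hs0 : (0 : A) ≤ s := CFC.sqrt_nonneg S
  have hssa : IsSelfAdjoint s := .of_nonneg hs0
  have hss : s * s = S := CFC.sqrt_mul_sqrt_self S hS0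
  have hcsS : Commute s S := by rw [← hss]; exact (Commute.refl s).mul_right (Commute.refl s)
  have hsu : IsUnit s := by
    have hvS : (↑hSu.unit⁻¹ : A) * S = 1 := by
      have h := hSu.unit.inv_mul
      rwa [hSu.unit_spec] at h
    have hcv : Commute s ((↑hSu.unit⁻¹ : A)) := by
      have h1 : Commute s ((↑hSu.unit : A)) := by rw [hSu.unit_spec]; exact hcsS
      exact h1.units_inv_right
    refine ⟨⟨s, (↑hSu.unit⁻¹ : A) * s, ?_, ?_⟩, rfl⟩
    · rw [← mul_assoc, hcv.eq, mul_assoc, hss, hvS]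
    · rw [mul_assoc, hss, hvS]
  set us : Aˣ := hsu.unit with hus_def
  have hus : (↑us : A) = s := hsu.unit_spec
  have hRs : Ring.inverse s = (↑us⁻¹ : A) := molnar_ring_inverse us hus
  have hsinv0 : (0 : A) ≤ ↑us⁻¹ := CFC.inv_nonneg_of_nonneg us (by rw [hus]; exact hs0)
  have hsinvsa : IsSelfAdjoint ((↑us⁻¹ : A)) := .of_nonneg hsinv0
  -- the element m = 1 - T² + T·2⁻¹·T, the minimum of the range of g
  have hu2inv0 : (0 : A) ≤ ↑u2⁻¹ := CFC.inv_nonneg_of_nonneg u2 (by rw [hu2]; exact h02)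
  set m : A := 1 - T ^ 2 + T * ↑u2⁻¹ * T with hm_def
  have hcTu2 : Commute T ((↑u2⁻¹ : A)) := by
    have h1 : Commute T ((↑u2 : A)) := by rw [hu2]; exact hcomm2 T
    exact h1.units_inv_right
  have hcc : (↑u2⁻¹ : A) + ↑u2⁻¹ = 1 := by
    have h1 : (2 : A) * ↑u2⁻¹ = 1 := by rw [← hu2]; exact u2.mul_inv
    rw [← h1, two_mul]
  have hm_eq : m = ↑u2⁻¹ * ((2 : A) - T ^ 2) := by
    have h1 : T * (↑u2⁻¹ : A) * T = ↑u2⁻¹ * T ^ 2 := by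
      rw [hcTu2.eq, mul_assoc, ← pow_two]
    have h3 : T ^ 2 - (↑u2⁻¹ : A) * T ^ 2 = (↑u2⁻¹ : A) * T ^ 2 := by
      rw [sub_eq_iff_eq_add, ← add_mul, hcc, one_mul]
    calc m = 1 - (T ^ 2 - ↑u2⁻¹ * T ^ 2) := by rw [hm_def, h1, sub_add]
      _ = 1 - ↑u2⁻¹ * T ^ 2 := by rw [h3]
      _ = ↑u2⁻¹ * (2 - T ^ 2) := by rw [mul_sub, ← hu2, u2.inv_mul]
  have hmu : IsUnit m := by rw [hm_eq]; exact u2⁻¹.isUnit.mul hDu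
  set um : Aˣ := u2⁻¹ * uD with hum_def
  have hum : (↑um : A) = m := by
    rw [hum_def, Units.val_mul, huD]; exact hm_eq.symm
  have hm0 : (0 : A) ≤ m := by
    set d : A := CFC.sqrt ((2 : A) - T ^ 2) with hd_def
    have hd0 : (0 : A) ≤ d := CFC.sqrt_nonneg _
    have hd2 : d * d = 2 - T ^ 2 := CFC.sqrt_mul_sqrt_self _ hD0
    have h1 : Commute d ((↑u2⁻¹ : A)) := by
      have ha : Commute d ((↑u2 : A)) := by rw [hu2]; exact hcomm2 d
      exact ha.units_inv_right
    have h3 : m = d * ↑u2⁻¹ * d :=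
      calc m = ↑u2⁻¹ * (d * d) := by rw [hm_eq, ← hd2]
        _ = (↑u2⁻¹ * d) * d := (mul_assoc _ _ _).symm
        _ = (d * ↑u2⁻¹) * d := by rw [← h1.eq]
    rw [h3]
    exact (IsSelfAdjoint.of_nonneg hd0).conjugate_nonneg hu2inv0
  have hum0 : (0 : A) ≤ ↑um := by rw [hum]; exact hm0
  have huminv : (↑um⁻¹ : A) = ↑uD⁻¹ * ↑u2 := by
    have h1 : um⁻¹ = uD⁻¹ * u2 := by rw [hum_def, mul_inv_rev, inv_inv]
    rw [h1, Units.val_mul]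
  have hSm : (↑um⁻¹ : A) - 1 = S := by
    have h4 : (↑uD⁻¹ : A) * (2 - T ^ 2) = 1 := by
      have h := uD.inv_mul; rwa [huD] at h
    calc (↑um⁻¹ : A) - 1 = ↑uD⁻¹ * 2 - ↑uD⁻¹ * (2 - T ^ 2) := by rw [huminv, hu2, h4]
      _ = ↑uD⁻¹ * (2 - (2 - T ^ 2)) := by rw [← mul_sub]
      _ = ↑uD⁻¹ * T ^ 2 := by rw [sub_sub_cancel]
      _ = S := by rw [← hcT2Dinv.eq, hS_def, hRD]
  have huminv_eq : (↑um⁻¹ : A) = 1 + S := by rw [← hSm]; abel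
  -- the per-effect bundle of units and bounds
  have eff : ∀ E : A, 0 ≤ E → E ≤ 1 → ∃ uE uG : Aˣ,
      (↑uE : A) = 1 + E ∧ (↑uG : A) = 1 - T ^ 2 + T * Ring.inverse (1 + E) * T ∧
      m ≤ ↑uG ∧ (↑uG : A) ≤ 1 ∧ (↑uG : A) = 1 - T ^ 2 + T * ↑uE⁻¹ * T := by
    intro E hE0 hE1
    have hEu : IsUnit ((1 : A) + E) :=
      CStarAlgebra.isUnit_of_le _ (le_add_of_nonneg_right hE0)
          (isUnit_one.isStrictlyPositive zero_le_one)
    have huE : (↑hEu.unit : A) = 1 + E := hEu.unit_spec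
    have hRE : Ring.inverse ((1 : A) + E) = (↑hEu.unit⁻¹ : A) := molnar_ring_inverse _ huE
    have huE0 : (0 : A) ≤ ↑hEu.unit := by
      rw [huE]; exact zero_le_one.trans (le_add_of_nonneg_right hE0)
    have hE2 : (↑hEu.unit : A) ≤ ↑u2 := by
      rw [huE, hu2, ← honeone]; exact add_le_add_right hE1 1
    have hinv_ub : (↑hEu.unit⁻¹ : A) ≤ 1 := by
      have h5 := CStarAlgebra.inv_le_inv (a := (1 : Aˣ)) (b := hEu.unit)
        (by rw [Units.val_one]; exact zero_le_one)
        (by rw [Units.val_one, huE]; exact le_add_of_nonneg_right hE0)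
      simpa using h5
    have hinv_lb : (↑u2⁻¹ : A) ≤ ↑hEu.unit⁻¹ := CStarAlgebra.inv_le_inv huE0 hE2
    have hXub : T * ↑hEu.unit⁻¹ * T ≤ T ^ 2 := by
      have h := hTsa.conjugate_le_conjugate hinv_ub
      rwa [mul_one, ← pow_two] at h
    have hXlb : T * ↑u2⁻¹ * T ≤ T * ↑hEu.unit⁻¹ * T := hTsa.conjugate_le_conjugate hinv_lb
    have hgub : 1 - T ^ 2 + T * ↑hEu.unit⁻¹ * T ≤ 1 := by
      have h6 : (1 : A) - T ^ 2 + T ^ 2 = 1 := by abel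
      have h := add_le_add_right hXub ((1 : A) - T ^ 2)
      rwa [h6] at h
    have hglb : m ≤ 1 - T ^ 2 + T * ↑hEu.unit⁻¹ * T := by
      rw [hm_def]; exact add_le_add_right hXlb _
    have hgu : IsUnit (1 - T ^ 2 + T * ↑hEu.unit⁻¹ * T) :=
      CStarAlgebra.isUnit_of_le _ hglb (hmu.isStrictlyPositive hm0)
    refine ⟨hEu.unit, hgu.unit, huE, ?_, ?_, ?_, hgu.unit_spec⟩
    · rw [hgu.unit_spec, hRE]
    · rw [hgu.unit_spec]; exact hglb
    · rw [hgu.unit_spec]; exact hgub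
  -- representation of the map through the units
  have phi_repr : ∀ (E : A) (uG : Aˣ), (↑uG : A) = 1 - T ^ 2 + T * Ring.inverse (1 + E) * T →
      molnarFun T E = ↑us⁻¹ * ((↑uG⁻¹ : A) - 1) * ↑us⁻¹ := by
    intro E uG huG
    have hRG : Ring.inverse (1 - T ^ 2 + T * Ring.inverse (1 + E) * T) = (↑uG⁻¹ : A) :=
      molnar_ring_inverse uG huG
    unfold molnarFun
    rw [← hS_def, ← hs_def, hRs, hRG]
  have conjT : ∀ a b : A, T * a * T ≤ T * b * T ↔ a ≤ b := by
    intro a b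
    have h := molnar_conj_le_conj_iff uT (by rw [huT]; exact hTsa) a b
    rwa [huT] at h
  have conjS : ∀ a b : A, ↑us⁻¹ * a * ↑us⁻¹ ≤ ↑us⁻¹ * b * ↑us⁻¹ ↔ a ≤ b := fun a b =>
    molnar_conj_le_conj_iff us⁻¹ hsinvsa a b
  -- the map sends effects to effects
  have phi_mem : ∀ E : A, 0 ≤ E → E ≤ 1 → 0 ≤ molnarFun T E ∧ molnarFun T E ≤ 1 := by
    intro E hE0 hE1
    obtain ⟨uE, uG, huE, huG, hmG, hG1, hG'⟩ := eff E hE0 hE1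
    have hG0 : (0 : A) ≤ ↑uG := hm0.trans hmG
    have hginv_lb : (1 : A) ≤ ↑uG⁻¹ := by
      have h5 := CStarAlgebra.inv_le_inv (a := uG) (b := (1 : Aˣ)) hG0
        (by rw [Units.val_one]; exact hG1)
      simpa using h5
    have hginv_ub : (↑uG⁻¹ : A) ≤ ↑um⁻¹ :=
      CStarAlgebra.inv_le_inv (a := um) (b := uG) hum0 (by rw [hum]; exact hmG)
    rw [phi_repr E uG huG]
    constructor
    · exact hsinvsa.conjugate_nonneg (sub_nonneg.mpr hginv_lb)
    · have h7 : (↑uG⁻¹ : A) - 1 ≤ S := by rw [← hSm]; exact sub_le_sub_right hginv_ub 1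
      have h8 := hsinvsa.conjugate_le_conjugate h7
      have h9 : (↑us⁻¹ : A) * S * ↑us⁻¹ = 1 := by
        rw [← hss, ← hus, ← mul_assoc, Units.inv_mul, one_mul, Units.mul_inv]
      rwa [h9] at h8
  -- the order is preserved in both directions
  have main_iff : ∀ E F : A, 0 ≤ E → E ≤ 1 → 0 ≤ F → F ≤ 1 →
      (E ≤ F ↔ molnarFun T E ≤ molnarFun T F) := by
    intro E F hE0 hE1 hF0 hF1
    obtain ⟨uE, uGE, huE, huGE, hmGE, hGE1, hGE'⟩ := eff E hE0 hE1
    obtain ⟨uF, uGF, huF, huGF, hmGF, hGF1, hGF'⟩ := eff F hF0 hF1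
    have hGE0 : (0 : A) ≤ ↑uGE := hm0.trans hmGE
    have hGF0 : (0 : A) ≤ ↑uGF := hm0.trans hmGF
    have huE0 : (0 : A) ≤ ↑uE := by
      rw [huE]; exact zero_le_one.trans (le_add_of_nonneg_right hE0)
    have huF0 : (0 : A) ≤ ↑uF := by
      rw [huF]; exact zero_le_one.trans (le_add_of_nonneg_right hF0)
    rw [phi_repr E uGE huGE, phi_repr F uGF huGF, conjS, sub_le_sub_iff_right,
      CStarAlgebra.inv_le_inv_iff hGE0 hGF0, hGE', hGF', add_le_add_iff_left, conjT,
      CStarAlgebra.inv_le_inv_iff huF0 huE0, huE, huF, add_le_add_iff_left]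
  -- surjectivity
  have surj : ∀ G : A, 0 ≤ G → G ≤ 1 → ∃ E : A, (0 ≤ E ∧ E ≤ 1) ∧ molnarFun T E = G := by
    intro G hG0 hG1
    have hsGs0 : (0 : A) ≤ s * G * s := hssa.conjugate_nonneg hG0
    have hsGsS : s * G * s ≤ S := by
      have h := hssa.conjugate_le_conjugate hG1
      rwa [mul_one, hss] at h
    have hWu : IsUnit ((1 : A) + s * G * s) :=
      CStarAlgebra.isUnit_of_le _ (le_add_of_nonneg_right hsGs0)
          (isUnit_one.isStrictlyPositive zero_le_one)
    set uW : Aˣ := hWu.unit with huW_def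
    have huW : (↑uW : A) = 1 + s * G * s := hWu.unit_spec
    have hW0 : (0 : A) ≤ ↑uW := by
      rw [huW]; exact zero_le_one.trans (le_add_of_nonneg_right hsGs0)
    have hWm : (↑uW : A) ≤ ↑um⁻¹ := by
      rw [huW, huminv_eq]; exact add_le_add_right hsGsS 1
    have hA0lb : m ≤ ↑uW⁻¹ := by
      have h5 := CStarAlgebra.inv_le_inv (a := uW) (b := um⁻¹) hW0 hWm
      rwa [inv_inv, hum] at h5
    have hA0ub : (↑uW⁻¹ : A) ≤ 1 := by
      have h5 := CStarAlgebra.inv_le_inv (a := (1 : Aˣ)) (b := uW)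
        (by rw [Units.val_one]; exact zero_le_one)
        (by rw [Units.val_one, huW]; exact le_add_of_nonneg_right hsGs0)
      simpa using h5
    have hTinv0 : (0 : A) ≤ ↑uT⁻¹ := CFC.inv_nonneg_of_nonneg uT (by rw [huT]; exact hT0)
    have hTinvsa : IsSelfAdjoint ((↑uT⁻¹ : A)) := .of_nonneg hTinv0
    set Z : A := ↑uW⁻¹ - 1 + T ^ 2 with hZ_def
    have hZlb : T * ↑u2⁻¹ * T ≤ Z := by
      have e1 : m - 1 + T ^ 2 = T * ↑u2⁻¹ * T := by rw [hm_def]; abel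
      have h : m - 1 + T ^ 2 ≤ Z := by
        rw [hZ_def]; exact add_le_add_left (sub_le_sub_right hA0lb 1) _
      rwa [e1] at h
    have hZub : Z ≤ T ^ 2 := by
      have h : Z ≤ 1 - 1 + T ^ 2 := by
        rw [hZ_def]; exact add_le_add_left (sub_le_sub_right hA0ub 1) _
      rwa [sub_self, zero_add] at h
    set Y : A := ↑uT⁻¹ * Z * ↑uT⁻¹ with hY_def
    have hYlb : (↑u2⁻¹ : A) ≤ Y := by
      have h := hTinvsa.conjugate_le_conjugate hZlb
      have e2 : (↑uT⁻¹ : A) * (T * ↑u2⁻¹ * T) * ↑uT⁻¹ = ↑u2⁻¹ := by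
        have h' := molnar_conj_cancel uT ((↑u2⁻¹ : A))
        rwa [huT] at h'
      rw [hY_def]
      rwa [e2] at h
    have hYub : Y ≤ 1 := by
      have h := hTinvsa.conjugate_le_conjugate hZub
      have e3 : (↑uT⁻¹ : A) * T ^ 2 * ↑uT⁻¹ = 1 := by
        have h' := molnar_conj_cancel uT (1 : A)
        rwa [mul_one, huT, ← pow_two] at h'
      rw [hY_def]
      rwa [e3] at h
    have hYu : IsUnit Y := CStarAlgebra.isUnit_of_le _ hYlb (u2⁻¹.isUnit.isStrictlyPositive hu2inv0)
    have huY : (↑hYu.unit : A) = Y := hYu.unit_spec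
    have hY0 : (0 : A) ≤ ↑hYu.unit := by rw [huY]; exact hu2inv0.trans hYlb
    have hYinv_lb : (1 : A) ≤ ↑hYu.unit⁻¹ := by
      have h5 := CStarAlgebra.inv_le_inv (a := hYu.unit) (b := (1 : Aˣ)) hY0
        (by rw [Units.val_one, huY]; exact hYub)
      simpa using h5
    have hYinv_ub : (↑hYu.unit⁻¹ : A) ≤ 2 := by
      have h5 := CStarAlgebra.inv_le_inv (a := u2⁻¹) (b := hYu.unit) hu2inv0
        (by rw [huY]; exact hYlb)
      rwa [inv_inv, hu2] at h5
    refine ⟨(↑hYu.unit⁻¹ : A) - 1, ⟨sub_nonneg.mpr hYinv_lb, ?_⟩, ?_⟩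
    · have h := sub_le_sub_right hYinv_ub 1
      have e4 : (2 : A) - 1 = 1 := by rw [← honeone]; abel
      rwa [e4] at h
    · have e5 : (1 : A) + ((↑hYu.unit⁻¹ : A) - 1) = ↑hYu.unit⁻¹ := by abel
      have hRE : Ring.inverse ((1 : A) + ((↑hYu.unit⁻¹ : A) - 1)) = Y := by
        rw [e5, molnar_ring_inverse hYu.unit⁻¹ rfl, inv_inv, huY]
      have e6 : T * Y * T = Z := by
        rw [hY_def]
        have h := molnar_conj_cancel uT⁻¹ Z
        rwa [inv_inv, huT] at h
      have e7 : 1 - T ^ 2 + Z = (↑uW⁻¹ : A) := by rw [hZ_def]; abel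
      have hRG : Ring.inverse (1 - T ^ 2 +
          T * Ring.inverse ((1 : A) + ((↑hYu.unit⁻¹ : A) - 1)) * T) = (↑uW : A) := by
        rw [hRE, e6, e7, molnar_ring_inverse uW⁻¹ rfl, inv_inv]
      unfold molnarFun
      rw [← hS_def, ← hs_def, hRs, hRG, huW]
      have e8 : (1 : A) + s * G * s - 1 = ↑us * G * ↑us := by rw [hus]; abel
      rw [e8]
      exact molnar_conj_cancel us G
  refine ⟨⟨?_, ?_, ?_⟩, ?_⟩
  · intro E hE
    exact phi_mem E hE.1 hE.2
  · intro E hE F hF h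
    exact le_antisymm ((main_iff E F hE.1 hE.2 hF.1 hF.2).mpr h.le)
      ((main_iff F E hF.1 hF.2 hE.1 hE.2).mpr h.ge)
  · intro G hG
    obtain ⟨E, hE, hEq⟩ := surj G hG.1 hG.2
    exact ⟨E, hE, hEq⟩
  · intro E F hE hF
    exact main_iff E F hE.1 hE.2 hF.1 hF.2


/-- for an invertible effect `T`, the map `molnarMap T` is a well-defined
bijection of the set of effects onto itself which preserves the order in both directions. -/
theorem molnarMap_bijOn_effects_and_orderPreserving
    {H : Type} [NormedAddCommGroup H] [InnerProductSpace ℂ H] [CompleteSpace H]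
    (T : H →L[ℂ] H) (hT : IsEffect T) (hTinv : IsUnit T) :
    Set.BijOn (molnarMap T) {E | IsEffect E} {E | IsEffect E} ∧
      ∀ E F : H →L[ℂ] H, IsEffect E → IsEffect F →
        (E ≤ F ↔ molnarMap T E ≤ molnarMap T F) := by
  have h := molnar_aux T hT.1 hT.2 hTinv
  have hfun : molnarMap T = molnarFun T := rfl
  constructor
  · rw [hfun]; exact h.1
  · intro E F hE hF
    rw [hfun]
    exact h.2 E F hE hF
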